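/- Given a dataset D_N = {x_1,...,x_N} drawn from p(x) and a minibatch B_M = {x_1,...,x_M} of M samples drawn i.i.d. uniformly from D_N, and a posterior that factorizes as q(z|x) = q(z_1|x) q(z_2|x), the following lower bound holds for n = 1 or 2: E_{q(z,x)}[ log q(z_n) ] >= E_{q(z,x)} [ log E_{r(B_M|x)} [ (1/(N M)) sum_{m=1}^M q(z_n | x_m) ] ], where r(B_M|x) is the distribution of a minibatch in which one element is fixed to x and the remaining M-1 elements are drawn i.i.d. uniformly from D_N. -/

import Mathlib

open Real


lemma mb_key {X Z : Type*} [Fintype X] [Nonempty X]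
    (M' : ℕ) (q : X → Z → ℝ) (hpos : ∀ x z, 0 ≤ q x z)
    (x : X) (z : Z) (w : ℝ) (hw : 0 ≤ w) (hwz : w = 0 ∨ 0 < q x z) :
    w * Real.log (∑ rest : Fin M' → X,
        ((Fintype.card X : ℝ)⁻¹) ^ M' *
          (((Fintype.card X : ℝ) * (M' + 1 : ℝ))⁻¹ *
            ∑ m : Fin (M' + 1), q ((Fin.cons x rest : Fin (M' + 1) → X) m) z))
      ≤ w * Real.log ((Fintype.card X : ℝ)⁻¹ * ∑ x' : X, q x' z) := by
  rcases hwz with h | h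
  · simp [h]
  set N : ℝ := (Fintype.card X : ℝ) with hN
  have hNpos : (0:ℝ) < N := by
    rw [hN]; exact_mod_cast (Fintype.card_pos (α := X))
  have hN1 : (1:ℝ) ≤ N := by rw [hN]; exact_mod_cast (Fintype.card_pos (α := X))
  have hMpos : (0:ℝ) < (M' + 1 : ℝ) := by positivity
  set S : ℝ := ∑ x' : X, q x' z with hS
  have hSx : q x z ≤ S := Finset.single_le_sum (fun i _ => hpos i z) (Finset.mem_univ x)
  have hSnn : 0 ≤ S := Finset.sum_nonneg fun i _ => hpos i z
  -- bound each minibatch sum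
  have hsum : ∀ rest : Fin M' → X,
      ∑ m : Fin (M' + 1), q ((Fin.cons x rest : Fin (M' + 1) → X) m) z ≤ (M' + 1 : ℝ) * S := by
    intro rest
    calc ∑ m : Fin (M' + 1), q ((Fin.cons x rest : Fin (M' + 1) → X) m) z
        ≤ ∑ _m : Fin (M' + 1), S := by
          refine Finset.sum_le_sum fun i _ => ?_
          exact Finset.single_le_sum (fun j _ => hpos j z) (Finset.mem_univ _)
      _ = (M' + 1 : ℝ) * S := by simp [mul_comm]
  have hA : (∑ rest : Fin M' → X,
      (N⁻¹) ^ M' * ((N * (M' + 1 : ℝ))⁻¹ *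
        ∑ m : Fin (M' + 1), q ((Fin.cons x rest : Fin (M' + 1) → X) m) z))
      ≤ N⁻¹ * S := by
    have card_fun : (Fintype.card (Fin M' → X) : ℝ) = N ^ M' := by
      rw [hN]
      exact_mod_cast by simp [Fintype.card_fun]
    calc (∑ rest : Fin M' → X,
        (N⁻¹) ^ M' * ((N * (M' + 1 : ℝ))⁻¹ *
          ∑ m : Fin (M' + 1), q ((Fin.cons x rest : Fin (M' + 1) → X) m) z))
        ≤ ∑ _rest : Fin M' → X, (N⁻¹) ^ M' * ((N * (M' + 1 : ℝ))⁻¹ * ((M' + 1 : ℝ) * S)) := by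
          refine Finset.sum_le_sum fun rest _ => ?_
          have h1 : (0:ℝ) ≤ (N⁻¹) ^ M' := by positivity
          have h2 : (0:ℝ) ≤ (N * (M' + 1 : ℝ))⁻¹ := by positivity
          exact mul_le_mul_of_nonneg_left (mul_le_mul_of_nonneg_left (hsum rest) h2) h1
      _ = (Fintype.card (Fin M' → X) : ℝ) * ((N⁻¹) ^ M' * ((N * (M' + 1 : ℝ))⁻¹ * ((M' + 1 : ℝ) * S))) := by
          simp [Finset.sum_const, nsmul_eq_mul]
      _ = N⁻¹ * S := by
          rw [card_fun]
          field_simp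
          rw [← mul_pow, mul_one_div_cancel hNpos.ne', one_pow, one_mul]
  have hApos : 0 < ∑ rest : Fin M' → X,
      (N⁻¹) ^ M' * ((N * (M' + 1 : ℝ))⁻¹ *
        ∑ m : Fin (M' + 1), q ((Fin.cons x rest : Fin (M' + 1) → X) m) z) := by
    refine Finset.sum_pos (fun rest _ => ?_) Finset.univ_nonempty
    have hp1 : (0:ℝ) < (N⁻¹) ^ M' := by positivity
    have hp2 : (0:ℝ) < (N * (M' + 1 : ℝ))⁻¹ := by positivity
    have hp3 : 0 < ∑ m : Fin (M' + 1), q ((Fin.cons x rest : Fin (M' + 1) → X) m) z := by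
      refine lt_of_lt_of_le h ?_
      have := Finset.single_le_sum
        (f := fun m : Fin (M' + 1) => q ((Fin.cons x rest : Fin (M' + 1) → X) m) z)
        (fun i _ => hpos _ z) (Finset.mem_univ 0)
      simpa using this
    positivity
  exact mul_le_mul_of_nonneg_left (Real.log_le_log hApos hA) hw


/-- Minibatch weighted sampling lower bound.  The data x is uniform on a finite
dataset of N points; the posterior factorizes as q(z|x) = q(z₁|x) q(z₂|x).
For n = 1 or 2, E_{q(z,x)}[log q(z_n)] is lower-bounded by
E_{q(z,x)}[ log E_{r(B_M|x)}[ (1/(N M)) ∑_{m=1}^M q(z_n|x_m) ] ], where r(B_M|x)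
fixes one minibatch element to x and draws the other M-1 i.i.d. uniformly. -/
theorem minibatch_weighted_sampling_lower_bound
    {X Z₁ Z₂ : Type*} [Fintype X] [Nonempty X] [Fintype Z₁] [Fintype Z₂]
    (M' : ℕ)
    (q₁ : X → Z₁ → ℝ) (q₂ : X → Z₂ → ℝ)
    (hq₁ : ∀ x, (∀ z, 0 ≤ q₁ x z) ∧ ∑ z : Z₁, q₁ x z = 1)
    (hq₂ : ∀ x, (∀ z, 0 ≤ q₂ x z) ∧ ∑ z : Z₂, q₂ x z = 1) :
    (∑ x : X, ∑ z₁ : Z₁, ∑ z₂ : Z₂,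
        ((Fintype.card X : ℝ)⁻¹ * q₁ x z₁ * q₂ x z₂) *
          Real.log ((Fintype.card X : ℝ)⁻¹ * ∑ x' : X, q₁ x' z₁)
      ≥ ∑ x : X, ∑ z₁ : Z₁, ∑ z₂ : Z₂,
          ((Fintype.card X : ℝ)⁻¹ * q₁ x z₁ * q₂ x z₂) *
            Real.log (∑ rest : Fin M' → X,
              ((Fintype.card X : ℝ)⁻¹) ^ M' *
                (((Fintype.card X : ℝ) * (M' + 1 : ℝ))⁻¹ *
                  ∑ m : Fin (M' + 1), q₁ ((Fin.cons x rest : Fin (M' + 1) → X) m) z₁)))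
    ∧
    (∑ x : X, ∑ z₁ : Z₁, ∑ z₂ : Z₂,
        ((Fintype.card X : ℝ)⁻¹ * q₁ x z₁ * q₂ x z₂) *
          Real.log ((Fintype.card X : ℝ)⁻¹ * ∑ x' : X, q₂ x' z₂)
      ≥ ∑ x : X, ∑ z₁ : Z₁, ∑ z₂ : Z₂,
          ((Fintype.card X : ℝ)⁻¹ * q₁ x z₁ * q₂ x z₂) *
            Real.log (∑ rest : Fin M' → X,
              ((Fintype.card X : ℝ)⁻¹) ^ M' *
                (((Fintype.card X : ℝ) * (M' + 1 : ℝ))⁻¹ *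
                  ∑ m : Fin (M' + 1), q₂ ((Fin.cons x rest : Fin (M' + 1) → X) m) z₂))) := by
  constructor
  · refine Finset.sum_le_sum fun x _ => Finset.sum_le_sum fun z₁ _ => Finset.sum_le_sum fun z₂ _ => ?_
    refine mb_key M' q₁ (fun a b => (hq₁ a).1 b) x z₁ _ ?_ ?_
    · have := (hq₁ x).1 z₁; have := (hq₂ x).1 z₂
      have : (0:ℝ) ≤ ((Fintype.card X : ℝ))⁻¹ := by positivity
      positivity
    · rcases eq_or_lt_of_le ((hq₁ x).1 z₁) with h | h
      · left; rw [← h]; ring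
      · right; exact h
  · refine Finset.sum_le_sum fun x _ => Finset.sum_le_sum fun z₁ _ => Finset.sum_le_sum fun z₂ _ => ?_
    refine mb_key M' q₂ (fun a b => (hq₂ a).1 b) x z₂ _ ?_ ?_
    · have := (hq₁ x).1 z₁; have := (hq₂ x).1 z₂
      have : (0:ℝ) ≤ ((Fintype.card X : ℝ))⁻¹ := by positivity
      positivity
    · rcases eq_or_lt_of_le ((hq₂ x).1 z₂) with h | h
      · left; rw [← h]; ring
      · right; exact h
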